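/- Let A = ℤ ⊕ (ℤ³ / ⟨2(λ_1 − λ_2)⟩) where λ_1, λ_2, μ denote the standard generators of ℤ³, and let G be the subgroup of A generated by (l', 2μ) and (0, 2λ_1), where l' generates the first ℤ summand. Then A/G ≅ ℤ ⊕ ℤ/2ℤ ⊕ ℤ/2ℤ. -/

import Mathlib

set_option maxHeartbeats 1000000 in
/-- Mayer–Vietoris computation: let `A = ℤ ⊕ (ℤ³/⟨2(λ₁-λ₂)⟩)` (with `λ₁, λ₂, μ`
the standard generators of `ℤ³`) and let `G ≤ A` be generated by `(l', 2μ)` and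
`(0, 2λ₁)`, where `l'` generates the `ℤ` summand.  Then
`A/G ≅ ℤ ⊕ ℤ/2ℤ ⊕ ℤ/2ℤ`. -/
theorem h1_of_glued_manifold :
    ∀ (K : AddSubgroup (Fin 3 → ℤ)),
      K = AddSubgroup.closure
            {(2 : ℤ) • (Pi.single (0 : Fin 3) (1 : ℤ) - Pi.single 1 1)} →
    ∀ (G : AddSubgroup (ℤ × ((Fin 3 → ℤ) ⧸ K))),
      G = AddSubgroup.closure
            {((1 : ℤ), QuotientAddGroup.mk ((2 : ℤ) • Pi.single (2 : Fin 3) (1 : ℤ))),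
             ((0 : ℤ), QuotientAddGroup.mk ((2 : ℤ) • Pi.single (0 : Fin 3) (1 : ℤ)))} →
    Nonempty ((ℤ × ((Fin 3 → ℤ) ⧸ K)) ⧸ G ≃+ ℤ × ZMod 2 × ZMod 2) := by
  intro K hK G hG
  -- the map ℤ³ → ℤ × ZMod 2 × ZMod 2, v ↦ (v 2, v 0, v 1)
  set g : (Fin 3 → ℤ) →+ ℤ × ZMod 2 × ZMod 2 :=
    { toFun := fun v => (v 2, ((v 0 : ℤ) : ZMod 2), ((v 1 : ℤ) : ZMod 2))
      map_zero' := by simp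
      map_add' := by intro a b; simp [Prod.ext_iff] } with hg
  have hKg : K ≤ g.ker := by
    rw [hK, AddSubgroup.closure_le]
    intro x hx
    simp only [Set.mem_singleton_iff] at hx
    subst hx
    simp [AddMonoidHom.mem_ker, hg, Pi.single_apply, Prod.ext_iff]
    decide
  -- induced map on the quotient
  set gbar : ((Fin 3 → ℤ) ⧸ K) →+ ℤ × ZMod 2 × ZMod 2 :=
    QuotientAddGroup.lift K g hKg with hgbar
  set F : (ℤ × ((Fin 3 → ℤ) ⧸ K)) →+ ℤ × ZMod 2 × ZMod 2 :=
    (zmultiplesHom _ (((-2 : ℤ), (0 : ZMod 2), (0 : ZMod 2)))).coprod gbar with hF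
  have hFmk : ∀ (n : ℤ) (v : Fin 3 → ℤ),
      F (n, QuotientAddGroup.mk v) = (v 2 - 2 * n, ((v 0 : ℤ) : ZMod 2), ((v 1 : ℤ) : ZMod 2)) := by
    intro n v
    simp [hF, hgbar, hg, Prod.ext_iff]
    ring
  have hsurj : Function.Surjective F := by
    rintro ⟨m, a, b⟩
    obtain ⟨a', rfl⟩ := ZMod.intCast_surjective a
    obtain ⟨b', rfl⟩ := ZMod.intCast_surjective b
    refine ⟨(0, QuotientAddGroup.mk (![a', b', m] : Fin 3 → ℤ)), ?_⟩
    rw [hFmk]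
    simp
  have hker : G = F.ker := by
    apply le_antisymm
    · rw [hG, AddSubgroup.closure_le]
      intro x hx
      simp only [Set.mem_insert_iff, Set.mem_singleton_iff] at hx
      rcases hx with rfl | rfl <;>
        simp [AddMonoidHom.mem_ker, hFmk, Pi.single_apply, Prod.ext_iff] <;>
        decide
    · rintro ⟨n, x⟩ hx
      obtain ⟨v, rfl⟩ := QuotientAddGroup.mk_surjective x
      rw [AddMonoidHom.mem_ker, hFmk, Prod.ext_iff, Prod.ext_iff] at hx
      simp only [Prod.fst_zero, Prod.snd_zero] at hx
      obtain ⟨h2, h0, h1⟩ := hx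
      have h2' : v 2 = 2 * n := by omega
      rw [ZMod.intCast_zmod_eq_zero_iff_dvd] at h0 h1
      obtain ⟨a, ha⟩ := h0
      obtain ⟨b, hb⟩ := h1
      have key : ((n : ℤ), (QuotientAddGroup.mk v : (Fin 3 → ℤ) ⧸ K)) =
          n • ((1 : ℤ), (QuotientAddGroup.mk ((2 : ℤ) • Pi.single (2 : Fin 3) (1 : ℤ)) : (Fin 3 → ℤ) ⧸ K))
          + (a + b) • ((0 : ℤ), (QuotientAddGroup.mk ((2 : ℤ) • Pi.single (0 : Fin 3) (1 : ℤ)) : (Fin 3 → ℤ) ⧸ K)) := by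
        rw [Prod.ext_iff]
        constructor
        · simp
        · show _ = n • (QuotientAddGroup.mk _ : (Fin 3 → ℤ) ⧸ K) + (a + b) • (QuotientAddGroup.mk _ : (Fin 3 → ℤ) ⧸ K)
          rw [← QuotientAddGroup.mk_zsmul, ← QuotientAddGroup.mk_zsmul,
            ← QuotientAddGroup.mk_add, QuotientAddGroup.eq]
          have : -v + (n • ((2 : ℤ) • Pi.single (2 : Fin 3) (1 : ℤ))
              + (a + b) • ((2 : ℤ) • Pi.single (0 : Fin 3) (1 : ℤ)))
              = b • ((2 : ℤ) • (Pi.single (0 : Fin 3) (1 : ℤ) - Pi.single 1 1)) := by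
            funext i
            fin_cases i <;> simp [Pi.single_apply] <;> omega
          rw [hK, AddSubgroup.mem_closure_singleton]
          exact ⟨b, this.symm⟩
      have hp : ((1 : ℤ), (QuotientAddGroup.mk ((2 : ℤ) • Pi.single (2 : Fin 3) (1 : ℤ)) : (Fin 3 → ℤ) ⧸ K)) ∈ G := by
        rw [hG]; exact AddSubgroup.subset_closure (Set.mem_insert _ _)
      have hq : ((0 : ℤ), (QuotientAddGroup.mk ((2 : ℤ) • Pi.single (0 : Fin 3) (1 : ℤ)) : (Fin 3 → ℤ) ⧸ K)) ∈ G := by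
        rw [hG]; exact AddSubgroup.subset_closure (Set.mem_insert_of_mem _ rfl)
      rw [key]
      exact add_mem (AddSubgroup.zsmul_mem _ hp n) (AddSubgroup.zsmul_mem _ hq (a + b))
  exact ⟨(QuotientAddGroup.quotientAddEquivOfEq hker).trans
    (QuotientAddGroup.quotientKerEquivOfSurjective F hsurj)⟩
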